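/- Let h : ℝ^n × ℝ^m → ℝ be continuously differentiable, K : ℝ^n → ℝ^{m×n} continuous, M : ℝ^n → ℝ^{n×n} continuous with M(x) symmetric positive definite, and Z ⊆ ℝ^n × ℝ^m. Suppose c ≥ 0 satisfies ‖(∂h/∂x(x,u) + ∂h/∂u(x,u) K(x)) M(x)^{−1/2}‖ ≤ c for all (x,u) ∈ Z. Let γ : [0,1] → ℝ^n be a continuously differentiable curve with γ(0) = z, let v ∈ ℝ^m, and define γ^u(s) := v + ∫₀^s K(γ(s̃)) γ'(s̃) ds̃. If (γ(s), γ^u(s)) ∈ Z for all s ∈ [0,1], then h(γ(1), γ^u(1)) ≤ h(z, v) + c ∫₀¹ ‖M(γ(s))^{1/2} γ'(s)‖ ds. -/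

import Mathlib

open Matrix MeasureTheory

/-- Euclidean norm of a vector in `ℝ^n`. -/
noncomputable def eucNorm {n : ℕ} (v : Fin n → ℝ) : ℝ := Real.sqrt (∑ i, (v i) ^ 2)

noncomputable def Matrix.PosSemidef.sqrt {n : Type*} [Fintype n]
    [DecidableEq n] {A : Matrix n n ℝ} (hA : A.PosSemidef) : Matrix n n ℝ :=
  hA.1.eigenvectorUnitary.1 * diagonal (Real.sqrt ∘ hA.1.eigenvalues) *
  (star hA.1.eigenvectorUnitary : Matrix n n ℝ)

lemma Matrix.PosSemidef.sqrt_mul_self {n : Type*} [Fintype n]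
    [DecidableEq n] {A : Matrix n n ℝ} (hA : A.PosSemidef) : hA.sqrt * hA.sqrt = A := by
  have hU : (star hA.1.eigenvectorUnitary : Matrix n n ℝ) * hA.1.eigenvectorUnitary.1 = 1 :=
    Unitary.coe_star_mul_self _
  unfold Matrix.PosSemidef.sqrt
  have e : ∀ X Y Z : Matrix n n ℝ, X * Y * Z * (X * Y * Z) = X * Y * (Z * X) * Y * Z := by
    intro X Y Z; simp only [Matrix.mul_assoc]
  rw [e, hU, Matrix.mul_one, Matrix.mul_assoc (hA.1.eigenvectorUnitary.1), diagonal_mul_diagonal]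
  conv_rhs => rw [hA.1.spectral_theorem, Unitary.conjStarAlgAut_apply]
  rw [show (fun i => (Real.sqrt ∘ hA.1.eigenvalues) i * (Real.sqrt ∘ hA.1.eigenvalues) i)
      = RCLike.ofReal ∘ hA.1.eigenvalues from
    funext fun i => by simp [Real.mul_self_sqrt (hA.eigenvalues_nonneg i)]]

lemma psd_sqrt_transpose {n : Type*} [Fintype n]
    [DecidableEq n] {A : Matrix n n ℝ} (hA : A.PosSemidef) : hA.sqrtᵀ = hA.sqrt := by
  rw [← conjTranspose_eq_transpose_of_trivial]
  unfold Matrix.PosSemidef.sqrt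
  simp [Matrix.mul_assoc]
  rw [star_eq_conjTranspose, conjTranspose_eq_transpose_of_trivial, transpose_transpose]

lemma eucNorm_nonneg {n : ℕ} (v : Fin n → ℝ) : 0 ≤ eucNorm v := Real.sqrt_nonneg _

lemma eucNorm_eq_sqrt_dot {n : ℕ} (v : Fin n → ℝ) : eucNorm v = Real.sqrt (v ⬝ᵥ v) := by
  unfold eucNorm dotProduct
  simp [sq]

/-- Cauchy–Schwarz for the Euclidean dot product. -/
lemma dot_le_eucNorm_mul {n : ℕ} (a b : Fin n → ℝ) :
    a ⬝ᵥ b ≤ eucNorm a * eucNorm b := by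
  have h := Finset.sum_mul_sq_le_sq_mul_sq Finset.univ a b
  have h1 : a ⬝ᵥ b ≤ |∑ i, a i * b i| := le_abs_self _
  calc a ⬝ᵥ b ≤ |∑ i, a i * b i| := h1
    _ = Real.sqrt ((∑ i, a i * b i) ^ 2) := (Real.sqrt_sq_eq_abs _).symm
    _ ≤ Real.sqrt ((∑ i, a i ^ 2) * ∑ i, b i ^ 2) := Real.sqrt_le_sqrt h
    _ = eucNorm a * eucNorm b := by
        rw [Real.sqrt_mul (Finset.sum_nonneg fun i _ => sq_nonneg _)]
        rfl

/-- Core estimate behind Lemma 4 (constraint tightening): along a C¹ curve `γ` from `z`,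
with auxiliary input curve `γᵘ(s) = v + ∫₀ˢ K(γ) γ' `, if the row vector
`(∂h/∂x + ∂h/∂u K(x)) M(x)^{-1/2}` has Euclidean norm at most `c` on `Z`, then the
constraint value at the endpoint grows by at most `c` times the `M`-weighted length. -/
theorem constraint_tightening_along_curve {n m : ℕ}
    (h : ((Fin n → ℝ) × (Fin m → ℝ)) → ℝ) (hh : ContDiff ℝ 1 h)
    (K : (Fin n → ℝ) → Matrix (Fin m) (Fin n) ℝ) (hK : Continuous K)
    (M : (Fin n → ℝ) → Matrix (Fin n) (Fin n) ℝ) (hMc : Continuous M)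
    (hM : ∀ x, (M x).PosDef)
    (Z : Set ((Fin n → ℝ) × (Fin m → ℝ)))
    (c : ℝ) (hc : 0 ≤ c)
    (hbound : ∀ p ∈ Z,
      eucNorm (Matrix.vecMul
        (fun j => fderiv ℝ h p (Pi.single j 1, fun i => K p.1 i j))
        ((hM p.1).posSemidef.sqrt)⁻¹) ≤ c)
    (γ γ' : ℝ → Fin n → ℝ) (z : Fin n → ℝ) (v : Fin m → ℝ)
    (hγ : ∀ s ∈ Set.Icc (0:ℝ) 1, HasDerivAt γ (γ' s) s)
    (hγ' : ContinuousOn γ' (Set.Icc 0 1))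
    (h0 : γ 0 = z)
    (γu : ℝ → Fin m → ℝ)
    (hγu : ∀ s, γu s = v + ∫ t in (0:ℝ)..s, (K (γ t)).mulVec (γ' t))
    (hZ : ∀ s ∈ Set.Icc (0:ℝ) 1, (γ s, γu s) ∈ Z) :
    h (γ 1, γu 1) ≤ h (z, v) +
      c * ∫ s in (0:ℝ)..1, eucNorm (((hM (γ s)).posSemidef.sqrt).mulVec (γ' s)) := by
  classical
  -- notation
  set q : ℝ → Fin m → ℝ := fun t => (K (γ t)).mulVec (γ' t) with hqdef
  set D : ℝ → ℝ := fun s => fderiv ℝ h (γ s, γu s) (γ' s, q s) with hDdef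
  set g : ℝ → ℝ := fun s => Real.sqrt ((γ' s) ⬝ᵥ (M (γ s)).mulVec (γ' s)) with hgdef
  have hγcont : ContinuousOn γ (Set.Icc 0 1) :=
    fun s hs => (hγ s hs).continuousAt.continuousWithinAt
  -- continuity of q on [0,1]
  have hq : ContinuousOn q (Set.Icc 0 1) := by
    apply continuousOn_pi.2
    intro i
    have : (fun t => q t i) = fun t => ∑ j, K (γ t) i j * γ' t j := by
      funext t; simp [hqdef, Matrix.mulVec, dotProduct]
    rw [this]
    apply continuousOn_finset_sum
    intro j _
    exact (((continuous_apply j).comp ((continuous_apply i).comp hK)).comp_continuousOn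
      hγcont).mul ((continuous_apply j).comp_continuousOn hγ')
  -- derivative of γu on (0,1)
  have hqint : ∀ s ∈ Set.Icc (0:ℝ) 1, IntervalIntegrable q volume 0 s := by
    intro s hs
    apply ContinuousOn.intervalIntegrable
    apply hq.mono
    rw [Set.uIcc_of_le hs.1]
    exact Set.Icc_subset_Icc le_rfl hs.2
  have hγu' : ∀ s ∈ Set.Ioo (0:ℝ) 1, HasDerivAt γu (q s) s := by
    intro s hs
    have hqo : ContinuousOn q (Set.Ioo 0 1) := hq.mono Set.Ioo_subset_Icc_self
    have h1 : HasDerivAt (fun x => ∫ t in (0:ℝ)..x, q t) (q s) s :=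
      intervalIntegral.integral_hasDerivAt_right
        (hqint s (Set.Ioo_subset_Icc_self hs))
        (hqo.stronglyMeasurableAtFilter isOpen_Ioo s hs)
        ((hqo.continuousAt (isOpen_Ioo.mem_nhds hs)))
    have : γu = fun x => v + ∫ t in (0:ℝ)..x, q t := funext hγu
    rw [this]
    simpa using h1.const_add v
  -- continuity of γu on [0,1]
  have hγucont : ContinuousOn γu (Set.Icc 0 1) := by
    have : γu = fun x => v + ∫ t in (0:ℝ)..x, q t := funext hγu
    rw [this]
    apply continuousOn_const.add
    have hint : IntegrableOn q (Set.uIcc (0:ℝ) 1) volume := by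
      rw [Set.uIcc_of_le zero_le_one]
      exact hq.integrableOn_compact isCompact_Icc
    have := intervalIntegral.continuousOn_primitive_interval hint
    rwa [Set.uIcc_of_le zero_le_one] at this
  -- φ and its derivative
  set φ : ℝ → ℝ := fun s => h (γ s, γu s) with hφdef
  have hφderiv : ∀ s ∈ Set.Ioo (0:ℝ) 1, HasDerivAt φ (D s) s := by
    intro s hs
    have hpair : HasDerivAt (fun s => (γ s, γu s)) (γ' s, q s) s :=
      (hγ s (Set.Ioo_subset_Icc_self hs)).prodMk (hγu' s hs)
    exact ((hh.differentiable one_ne_zero (γ s, γu s)).hasFDerivAt).comp_hasDerivAt s hpair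
  have hφcont : ContinuousOn φ (Set.Icc 0 1) :=
    hh.continuous.comp_continuousOn (hγcont.prodMk hγucont)
  -- continuity of D on [0,1]
  have hD : ContinuousOn D (Set.Icc 0 1) := by
    have h1 : ContinuousOn (fun s => fderiv ℝ h (γ s, γu s)) (Set.Icc 0 1) :=
      (hh.continuous_fderiv one_ne_zero).comp_continuousOn (hγcont.prodMk hγucont)
    exact h1.clm_apply (hγ'.prodMk hq)
  -- continuity of g on [0,1]
  have hg : ContinuousOn g (Set.Icc 0 1) := by
    apply ContinuousOn.sqrt
    have : (fun s => (γ' s) ⬝ᵥ (M (γ s)).mulVec (γ' s))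
        = fun s => ∑ i, γ' s i * (∑ j, M (γ s) i j * γ' s j) := by
      funext s; simp [dotProduct, Matrix.mulVec]
    rw [this]
    apply continuousOn_finset_sum
    intro i _
    refine ((continuous_apply i).comp_continuousOn hγ').mul ?_
    apply continuousOn_finset_sum
    intro j _
    exact (((continuous_apply j).comp ((continuous_apply i).comp hMc)).comp_continuousOn
      hγcont).mul ((continuous_apply j).comp_continuousOn hγ')
  -- key pointwise identity: eucNorm (sqrt M *ᵥ w) = g
  have hnormeq : ∀ s, eucNorm (((hM (γ s)).posSemidef.sqrt).mulVec (γ' s)) = g s := by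
    intro s
    set S := (hM (γ s)).posSemidef.sqrt with hSdef
    have hSt : Sᵀ = S := by
      exact psd_sqrt_transpose _
    have hSS : S * S = M (γ s) := (hM (γ s)).posSemidef.sqrt_mul_self
    have key : (S.mulVec (γ' s)) ⬝ᵥ (S.mulVec (γ' s))
        = (γ' s) ⬝ᵥ (M (γ s)).mulVec (γ' s) := by
      conv_rhs => rw [← hSS, ← Matrix.mulVec_mulVec]
      rw [dotProduct_mulVec (γ' s) S (S.mulVec (γ' s))]
      congr 1
      rw [← hSt, Matrix.vecMul_transpose, hSt]
    rw [eucNorm_eq_sqrt_dot, key]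
  -- pointwise bound D ≤ c * g on [0,1]
  have hpt : ∀ s ∈ Set.Icc (0:ℝ) 1, D s ≤ c * g s := by
    intro s hs
    have hpZ := hZ s hs
    set p := (γ s, γu s) with hpdef
    set S := (hM (γ s)).posSemidef.sqrt with hSdef
    set w := γ' s with hwdef
    set d : Fin n → ℝ := fun j => fderiv ℝ h p (Pi.single j 1, fun i => K (γ s) i j) with hddef
    -- D s = d ⬝ᵥ w
    have hDeq : D s = d ⬝ᵥ w := by
      have hexp : ((w, (K (γ s)).mulVec w) : (Fin n → ℝ) × (Fin m → ℝ))
          = ∑ j, w j • ((Pi.single j 1 : Fin n → ℝ), fun i => K (γ s) i j) := by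
        ext k
        · simp [Prod.fst_sum, Finset.sum_apply, Pi.single_apply, mul_comm]
        · simp [Prod.snd_sum, Matrix.mulVec, dotProduct, Finset.sum_apply, mul_comm]
      have h2 : fderiv ℝ h p (w, (K (γ s)).mulVec w)
          = ∑ j, w j * fderiv ℝ h p (Pi.single j 1, fun i => K (γ s) i j) := by
        rw [hexp, map_sum]
        simp only [_root_.map_smul, smul_eq_mul]
      have h3 : d ⬝ᵥ w = ∑ j, w j * d j := by
        simp [dotProduct, mul_comm]
      rw [show D s = fderiv ℝ h p (w, (K (γ s)).mulVec w) from rfl, h2, h3]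
    -- det S ≠ 0
    have hdet : IsUnit S.det := by
      have hMdet : (0:ℝ) < (M (γ s)).det := (hM (γ s)).det_pos
      have : S.det * S.det = (M (γ s)).det := by
        rw [← Matrix.det_mul, (hM (γ s)).posSemidef.sqrt_mul_self]
      apply isUnit_iff_ne_zero.2
      intro h0'
      rw [h0', zero_mul] at this
      rw [← this] at hMdet
      exact lt_irrefl 0 hMdet
    have hinv : S⁻¹ * S = 1 := Matrix.nonsing_inv_mul S hdet
    -- d ⬝ᵥ w = (d ᵥ* S⁻¹) ⬝ᵥ (S *ᵥ w)
    have hsplit : d ⬝ᵥ w = (Matrix.vecMul d S⁻¹) ⬝ᵥ (S.mulVec w) := by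
      rw [dotProduct_mulVec, Matrix.vecMul_vecMul, hinv, Matrix.vecMul_one]
    have hCS : d ⬝ᵥ w ≤ eucNorm (Matrix.vecMul d S⁻¹) * eucNorm (S.mulVec w) := by
      rw [hsplit]; exact dot_le_eucNorm_mul _ _
    have hb : eucNorm (Matrix.vecMul d S⁻¹) ≤ c := hbound p hpZ
    have : d ⬝ᵥ w ≤ c * eucNorm (S.mulVec w) :=
      hCS.trans (mul_le_mul_of_nonneg_right hb (eucNorm_nonneg _))
    rw [hDeq]
    calc d ⬝ᵥ w ≤ c * eucNorm (S.mulVec w) := this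
      _ = c * g s := by rw [hnormeq s]
  -- FTC
  have hftc : ∫ s in (0:ℝ)..1, D s = φ 1 - φ 0 := by
    apply intervalIntegral.integral_eq_sub_of_hasDeriv_right_of_le zero_le_one hφcont
    · intro s hs
      exact (hφderiv s hs).hasDerivWithinAt
    · apply ContinuousOn.intervalIntegrable
      rwa [Set.uIcc_of_le zero_le_one]
  -- comparison of integrals
  have hmono : ∫ s in (0:ℝ)..1, D s ≤ ∫ s in (0:ℝ)..1, c * g s := by
    apply intervalIntegral.integral_mono_on zero_le_one
    · apply ContinuousOn.intervalIntegrable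
      rwa [Set.uIcc_of_le zero_le_one]
    · apply ContinuousOn.intervalIntegrable
      rw [Set.uIcc_of_le zero_le_one]
      exact continuousOn_const.mul hg
    · exact hpt
  have hfin : φ 1 - φ 0 ≤ c * ∫ s in (0:ℝ)..1, g s := by
    rw [← hftc, intervalIntegral.integral_const_mul] at *
    exact hmono
  have hφ0 : φ 0 = h (z, v) := by
    have : γu 0 = v := by simp [hγu 0]
    simp [hφdef, h0, this]
  have hrw : (fun s => eucNorm (((hM (γ s)).posSemidef.sqrt).mulVec (γ' s))) = g :=
    funext hnormeq
  calc h (γ 1, γu 1) = φ 1 := rfl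
    _ ≤ φ 0 + c * ∫ s in (0:ℝ)..1, g s := by linarith
    _ = h (z, v) + c * ∫ s in (0:ℝ)..1,
        eucNorm (((hM (γ s)).posSemidef.sqrt).mulVec (γ' s)) := by rw [hφ0, hrw]
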